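/- Let n,d be integers with 2 ≤ n < d and G = gcd(n,d). Set 2g - 2 = nd - n - d - G with g ≥ 2. Then the number of pairs (i,j) ∈ ℤ² with i ≥ 0, 0 ≤ j < n, and ni + dj ≤ 2g - 2 equals g. -/

import Mathlib

open Finset

lemma aux_period_shift {M : Type*} [AddCommMonoid M] (f : ℕ → M) (p : ℕ)
    (hper : ∀ j, f (j + p) = f j) : ∀ q r, f (q * p + r) = f r := by
  intro q
  induction q with
  | zero => simp
  | succ B ihB =>
    intro r
    have : (B + 1) * p + r = (B * p + r) + p := by ring
    rw [this, hper, ihB]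

lemma aux_period_sum {M : Type*} [AddCommMonoid M] (f : ℕ → M) (p : ℕ)
    (hper : ∀ j, f (j + p) = f j) (A : ℕ) :
    ∑ j ∈ range (A * p), f j = A • (∑ r ∈ range p, f r) := by
  induction A with
  | zero => simp
  | succ A ih =>
    rw [Nat.succ_mul, Finset.sum_range_add, ih, succ_nsmul]
    congr 1
    exact Finset.sum_congr rfl fun r _ => aux_period_shift f p hper A r

lemma key_mod_sum (n d C : ℤ) (hn : 0 < n) (hdC : (Int.gcd n d : ℤ) ∣ C) :
    2 * ∑ j ∈ range n.toNat, (C - d * (j : ℤ)) % n = n * (n - Int.gcd n d) := by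
  set G : ℤ := (Int.gcd n d : ℤ) with hGdef
  have h0 : 0 < Int.gcd n d := by
    apply Nat.pos_of_ne_zero
    simp [Int.gcd_eq_zero_iff]
    intro h; omega
  have hGpos : 0 < G := by rw [hGdef]; exact_mod_cast h0
  have hGn : G ∣ n := Int.gcd_dvd_left n d
  have hGd : G ∣ d := Int.gcd_dvd_right n d
  set n1 : ℤ := n / G with hn1def
  set d1 : ℤ := d / G with hd1def
  have hnG : n = G * n1 := (Int.ediv_mul_cancel hGn).symm.trans (mul_comm _ _)
  have hdG : d = G * d1 := (Int.ediv_mul_cancel hGd).symm.trans (mul_comm _ _)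
  have hn1pos : 0 < n1 := by
    rcases lt_trichotomy n1 0 with h | h | h
    · nlinarith
    · rw [h, mul_zero] at hnG; omega
    · exact h
  have hcop : Int.gcd n1 d1 = 1 := Int.gcd_div_gcd_div_gcd h0
  set N1 : ℕ := n1.toNat with hN1def
  have hN1 : (N1 : ℤ) = n1 := Int.toNat_of_nonneg hn1pos.le
  set f : ℕ → ℤ := fun j => (C - d * (j : ℤ)) % n with hf
  have hper : ∀ j, f (j + N1) = f j := by
    intro j
    show (C - d * ((j : ℕ) + N1 : ℕ)) % n = (C - d * j) % n
    push_cast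
    rw [hN1]
    have h : C - d * ((j : ℤ) + n1) = (C - d * j) + (-d1) * n := by
      rw [hnG, hdG]; ring
    rw [h, Int.add_mul_emod_self_right]
  have hNsplit : n.toNat = (Int.gcd n d) * N1 := by
    have h : (n.toNat : ℤ) = ((Int.gcd n d) * N1 : ℕ) := by
      push_cast
      rw [Int.toNat_of_nonneg hn.le, hN1, ← hGdef, ← hnG]
    exact_mod_cast h
  have hsplit : ∑ j ∈ range n.toNat, f j = (Int.gcd n d) • (∑ r ∈ range N1, f r) := by
    rw [hNsplit]; exact aux_period_sum f N1 hper _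
  have hinj : ∀ r1 ∈ range N1, ∀ r2 ∈ range N1, f r1 = f r2 → r1 = r2 := by
    intro r1 h1 r2 h2 heq
    have h1' : (r1 : ℤ) < n1 := by
      have := mem_range.mp h1; omega
    have h2' : (r2 : ℤ) < n1 := by
      have := mem_range.mp h2; omega
    have hsub : (C - d * r1 - (C - d * r2)) % n = 0 :=
      Int.emod_eq_emod_iff_emod_sub_eq_zero.mp heq
    have hdvd : n ∣ d * ((r2 : ℤ) - r1) := by
      have h := Int.dvd_of_emod_eq_zero hsub
      have h' : C - d * r1 - (C - d * r2) = d * ((r2 : ℤ) - r1) := by ring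
      rwa [h'] at h
    have hdvd1 : n1 ∣ d1 * ((r2 : ℤ) - r1) := by
      rcases hdvd with ⟨k, hk⟩
      refine ⟨k, ?_⟩
      apply mul_left_cancel₀ (ne_of_gt hGpos)
      rw [hnG, hdG] at hk
      linarith [hk]
    have hcop' : IsCoprime n1 d1 := Int.isCoprime_iff_gcd_eq_one.mpr hcop
    have hdvd2 : n1 ∣ ((r2 : ℤ) - r1) := hcop'.dvd_of_dvd_mul_left hdvd1
    have h : (r2 : ℤ) - r1 = 0 := by
      rcases hdvd2 with ⟨k, hk⟩
      rcases lt_trichotomy k 0 with h | h | h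
      · nlinarith
      · rw [h, mul_zero] at hk; omega
      · nlinarith
    omega
  have hinjG : ∀ a ∈ range N1, ∀ b ∈ range N1,
      G * (a : ℤ) = G * (b : ℤ) → a = b := by
    intro a _ b _ hab
    have h : (a : ℤ) = b := mul_left_cancel₀ (ne_of_gt hGpos) hab
    exact_mod_cast h
  have himg : (range N1).image f = (range N1).image (fun k : ℕ => G * (k : ℤ)) := by
    apply Finset.eq_of_subset_of_card_le
    · intro v hv
      rcases Finset.mem_image.mp hv with ⟨r, hr, hrv⟩
      have hv0 : 0 ≤ v := hrv ▸ Int.emod_nonneg _ (ne_of_gt hn)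
      have hvn : v < n := hrv ▸ Int.emod_lt_of_pos _ hn
      have hGv : G ∣ v := by
        rw [← hrv, hf]
        show G ∣ (C - d * r) % n
        rw [Int.emod_def]
        exact dvd_sub (dvd_sub hdC (hGd.mul_right _)) (hGn.mul_right _)
      rcases hGv with ⟨k, hk⟩
      have hk0 : 0 ≤ k := by nlinarith
      have hkn : k < n1 := by nlinarith
      apply Finset.mem_image.mpr
      refine ⟨k.toNat, ?_, ?_⟩
      · rw [Finset.mem_range]; omega
      · rw [Int.toNat_of_nonneg hk0, ← hk]
    · rw [Finset.card_image_of_injOn hinjG, Finset.card_image_of_injOn hinj]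
  have e1 : ∑ v ∈ (range N1).image f, v = ∑ r ∈ range N1, f r :=
    Finset.sum_image hinj
  have e2 : ∑ v ∈ (range N1).image (fun k : ℕ => G * (k : ℤ)), v
      = ∑ k ∈ range N1, G * (k : ℤ) := Finset.sum_image hinjG
  have hsum1 : ∑ r ∈ range N1, f r = ∑ k ∈ range N1, G * (k : ℤ) := by
    rw [← e1, himg, e2]
  have h3 : (∑ k ∈ range N1, (k : ℤ)) = ((∑ i ∈ range N1, i : ℕ) : ℤ) := by push_cast; rfl
  have h2 : ((∑ i ∈ range N1, i : ℕ) : ℤ) * 2 = n1 * (n1 - 1) := by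
    have hN1ge : 1 ≤ N1 := by omega
    have hcast : ((N1 * (N1 - 1) : ℕ) : ℤ) = n1 * (n1 - 1) := by
      push_cast [Nat.cast_sub hN1ge]
      rw [hN1]
    rw [← hcast, ← sum_range_id_mul_two N1]; push_cast; ring
  have hgauss : 2 * ∑ k ∈ range N1, G * (k : ℤ) = G * (n1 * (n1 - 1)) := by
    rw [← Finset.mul_sum, h3]
    linear_combination G * h2
  rw [hsplit, nsmul_eq_mul, hsum1]
  have hA : ((Int.gcd n d : ℕ) : ℤ) = G := rfl
  calc 2 * ((Int.gcd n d : ℕ) * ∑ k ∈ range N1, G * (k : ℤ))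
      = G * (2 * ∑ k ∈ range N1, G * (k : ℤ)) := by rw [hA]; ring
    _ = G * (G * (n1 * (n1 - 1))) := by rw [hgauss]
    _ = n * (n - G) := by rw [hnG]; ring


/-- `q = 1` case: the number of integer pairs `(i,j)` with `i ≥ 0`, `0 ≤ j < n`,
`ni + dj ≤ 2g-2` equals `g`, where `2(g-1) = nd-n-d-gcd(n,d)` and `g ≥ 2`. -/
theorem card_basis_q_one (n d g : ℤ) (hn : 2 ≤ n) (hnd : n < d)
    (hg : 2 * (g - 1) = n * d - n - d - (Int.gcd n d : ℤ)) (hg2 : 2 ≤ g) :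
    (({p : ℤ × ℤ | 0 ≤ p.1 ∧ 0 ≤ p.2 ∧ p.2 < n ∧
        n * p.1 + d * p.2 ≤ 2 * g - 2}.ncard : ℤ)) = g := by
  set C : ℤ := 2 * g - 2 with hCg
  set G : ℤ := (Int.gcd n d : ℤ) with hGdef
  have hCC : 2 * g - 2 = n * d - n - d - G := by linarith [hg]
  have hn0 : 0 < n := by omega
  have hd0 : 0 < d := by omega
  have hC0 : 0 ≤ C := by rw [hCg]; omega
  have h0 : 0 < Int.gcd n d := by
    apply Nat.pos_of_ne_zero
    simp [Int.gcd_eq_zero_iff]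
    intro h; omega
  have hGpos : 0 < G := by rw [hGdef]; exact_mod_cast h0
  have hGn : G ∣ n := Int.gcd_dvd_left n d
  have hGd : G ∣ d := Int.gcd_dvd_right n d
  have hGlen : G ≤ n := Int.le_of_dvd hn0 hGn
  have hdnG : n + G ≤ d := by
    have hdvd : G ∣ d - n := dvd_sub hGd hGn
    have := Int.le_of_dvd (by omega) hdvd
    omega
  have hGC : G ∣ C := by
    have : C = n * d - n - d - G := by rw [hCg]; linarith
    rw [this]
    exact dvd_sub (dvd_sub (dvd_sub (hGn.mul_right d) hGn) hGd) dvd_rfl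
  set F : Finset (ℤ × ℤ) := (Finset.Icc (0:ℤ) C ×ˢ Finset.Icc (0:ℤ) (n-1)).filter
    (fun p => n * p.1 + d * p.2 ≤ C) with hF
  have hmemF : ∀ p : ℤ × ℤ, p ∈ F ↔
      ((0 ≤ p.1 ∧ p.1 ≤ C) ∧ (0 ≤ p.2 ∧ p.2 ≤ n - 1)) ∧ n * p.1 + d * p.2 ≤ C := by
    intro p
    rw [hF, Finset.mem_filter, Finset.mem_product, Finset.mem_Icc, Finset.mem_Icc]
  have hset : {p : ℤ × ℤ | 0 ≤ p.1 ∧ 0 ≤ p.2 ∧ p.2 < n ∧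
      n * p.1 + d * p.2 ≤ C} = ↑F := by
    ext p
    rw [Set.mem_setOf_eq, Finset.mem_coe, hmemF]
    constructor
    · rintro ⟨h1, h2, h3, h4⟩
      have hdp2 : 0 ≤ d * p.2 := mul_nonneg hd0.le h2
      have hp1 : p.1 ≤ n * p.1 := le_mul_of_one_le_left h1 (by omega)
      exact ⟨⟨⟨h1, by linarith⟩, h2, by omega⟩, h4⟩
    · rintro ⟨⟨⟨h1, _⟩, h2, h3⟩, h4⟩
      exact ⟨h1, h2, by omega, h4⟩
  rw [hset, Set.ncard_coe_finset]
  -- fiberwise count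
  have hfib := Finset.card_eq_sum_card_fiberwise (f := fun p : ℤ × ℤ => p.2)
      (s := F) (t := Finset.Icc (0:ℤ) (n-1))
      (fun p hp => by rw [Finset.mem_coe, hmemF] at hp; rw [Finset.mem_coe, Finset.mem_Icc]; exact hp.1.2)
  have hfiber : ∀ j ∈ Finset.Icc (0:ℤ) (n-1),
      (F.filter (fun p => p.2 = j)).card = ((C - d * j) / n + 1).toNat := by
    intro j hj
    rw [Finset.mem_Icc] at hj
    have hEle : (C - d * j) / n ≤ C := by
      have h1 : C - d * j ≤ C := by nlinarith [mul_nonneg hd0.le hj.1]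
      exact le_trans (Int.ediv_le_ediv hn0 h1) (Int.ediv_le_self n hC0)
    have hcard : (F.filter fun p => p.2 = j).card
        = (Finset.Icc (0:ℤ) ((C - d * j) / n)).card := by
      refine Finset.card_bij' (fun p _ => p.1) (fun i _ => (i, j)) ?hi ?hj ?left ?right
      case hi =>
        intro p hp
        rw [Finset.mem_filter, hmemF] at hp
        obtain ⟨⟨⟨⟨ha, _⟩, _⟩, hb⟩, hc⟩ := hp
        rw [Finset.mem_Icc]
        refine ⟨ha, ?_⟩
        rw [Int.le_ediv_iff_mul_le hn0]
        rw [hc] at hb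
        linarith
      case hj =>
        intro i hi
        rw [Finset.mem_Icc] at hi
        rw [Finset.mem_filter, hmemF]
        refine ⟨⟨⟨⟨hi.1, le_trans hi.2 hEle⟩, hj⟩, ?_⟩, rfl⟩
        have := (Int.le_ediv_iff_mul_le hn0).mp hi.2
        linarith
      case left =>
        intro p hp
        rw [Finset.mem_filter] at hp
        exact Prod.ext rfl hp.2.symm
      case right =>
        intro i hi
        rfl
    rw [hcard, Int.card_Icc]
    congr 1
    ring
  rw [hfib, Finset.sum_congr rfl hfiber]
  -- reindex to ℕ
  set N : ℕ := n.toNat with hNdef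
  have hN : (N : ℤ) = n := Int.toNat_of_nonneg hn0.le
  have hreind : ∑ j ∈ Finset.Icc (0:ℤ) (n-1), ((C - d * j) / n + 1).toNat
      = ∑ t ∈ range N, ((C - d * (t : ℤ)) / n + 1).toNat := by
    refine Finset.sum_nbij' (s := Finset.Icc (0:ℤ) (n-1)) (t := range N)
      (f := fun j => ((C - d * j) / n + 1).toNat)
      (g := fun t => ((C - d * (t : ℤ)) / n + 1).toNat)
      (fun j => j.toNat) (fun t => (t : ℤ)) ?_ ?_ ?_ ?_ ?_
    · intro a ha
      simp only [Finset.mem_Icc] at ha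
      simp only [Finset.mem_range, hNdef]
      omega
    · intro a ha
      simp only [Finset.mem_range, hNdef] at ha
      simp only [Finset.mem_Icc]
      omega
    · intro a ha
      simp only [Finset.mem_Icc] at ha
      omega
    · intro a _
      omega
    · intro a ha
      simp only [Finset.mem_Icc] at ha
      simp only [Int.toNat_of_nonneg ha.1]
  rw [hreind]
  rw [Nat.cast_sum]
  -- split off last index
  have hN2 : 2 ≤ N := by omega
  have hNsucc : N = (N - 1) + 1 := by omega
  have hlast : ((C - d * (((N - 1 : ℕ)) : ℤ)) / n + 1).toNat = 0 := by
    have hcast : (((N - 1 : ℕ)) : ℤ) = n - 1 := by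
      push_cast [Nat.cast_sub (by omega : 1 ≤ N)]
      rw [hN]
    have hval : C - d * (n - 1) = (n - G) + (-2) * n := by
      rw [hCg]; linarith
    have hdiv : (C - d * (n - 1)) / n = -2 := by
      rw [hval, Int.add_mul_ediv_right _ _ (ne_of_gt hn0),
        Int.ediv_eq_zero_of_lt (by omega) (by omega)]
      ring
    rw [hcast, hdiv]
    rfl
  have hsplitlast : ∑ t ∈ range N, (((C - d * (t : ℤ)) / n + 1).toNat : ℤ)
      = ∑ t ∈ range (N - 1), (((C - d * (t : ℤ)) / n + 1).toNat : ℤ) := by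
    rw [hNsucc]
    rw [Finset.sum_range_succ]
    rw [← hNsucc, hlast]
    simp
  rw [hsplitlast]
  have hpos : ∀ t ∈ range (N - 1), (((C - d * (t : ℤ)) / n + 1).toNat : ℤ)
      = (C - d * (t : ℤ)) / n + 1 := by
    intro t ht
    rw [Finset.mem_range] at ht
    have htn : (t : ℤ) ≤ n - 2 := by omega
    have hnum : 0 ≤ C - d * (t : ℤ) := by
      have : d * (t : ℤ) ≤ d * (n - 2) := by
        apply mul_le_mul_of_nonneg_left htn hd0.le
      have hC2 : C = n * d - n - d - G := by rw [hCg]; linarith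
      nlinarith
    have := Int.ediv_nonneg hnum hn0.le
    rw [Int.toNat_of_nonneg (by omega)]
  rw [Finset.sum_congr rfl hpos]
  -- now pure integer sum computation
  set X : ℤ := ∑ t ∈ range (N - 1), (C - d * (t : ℤ)) / n with hX
  set D : ℤ := ∑ t ∈ range N, (C - d * (t : ℤ)) / n with hD
  set M : ℤ := ∑ t ∈ range N, (C - d * (t : ℤ)) % n with hM
  have hDX : D = X - 2 := by
    rw [hD, hX, hNsucc, Finset.sum_range_succ, ← hNsucc]
    have hcast : (((N - 1 : ℕ)) : ℤ) = n - 1 := by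
      push_cast [Nat.cast_sub (by omega : 1 ≤ N)]
      rw [hN]
    have hval : C - d * (n - 1) = (n - G) + (-2) * n := by
      rw [hCg]; linarith
    have hdiv : (C - d * (n - 1)) / n = -2 := by
      rw [hval, Int.add_mul_ediv_right _ _ (ne_of_gt hn0),
        Int.ediv_eq_zero_of_lt (by omega) (by omega)]
      ring
    rw [hcast, hdiv]
    ring
  have hMval : 2 * M = n * (n - G) := key_mod_sum n d C hn0 hGC
  have hSplitDM : ∑ t ∈ range N, (C - d * (t : ℤ)) = n * D + M := by
    rw [hD, hM, Finset.mul_sum, ← Finset.sum_add_distrib]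
    exact Finset.sum_congr rfl fun t _ => (Int.mul_ediv_add_emod _ n).symm
  have hgaussN : ((∑ i ∈ range N, i : ℕ) : ℤ) * 2 = n * (n - 1) := by
    have hcastg : ((N * (N - 1) : ℕ) : ℤ) = n * (n - 1) := by
      push_cast [Nat.cast_sub (by omega : 1 ≤ N)]
      rw [hN]
    rw [← hcastg, ← sum_range_id_mul_two N]
    push_cast
    ring
  have hTot : 2 * ∑ t ∈ range N, (C - d * (t : ℤ)) = 2 * n * C - d * (n * (n - 1)) := by
    have h1 : ∑ t ∈ range N, (C - d * (t : ℤ))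
        = (N : ℤ) * C - d * ((∑ i ∈ range N, i : ℕ) : ℤ) := by
      rw [Finset.sum_sub_distrib, Finset.sum_const, Finset.card_range, nsmul_eq_mul, ← Finset.mul_sum]
      congr 1
      push_cast
      rfl
    rw [h1, hN]
    linear_combination (-d) * hgaussN
  -- conclude
  have hsum : ∑ t ∈ range (N - 1), ((C - d * (t : ℤ)) / n + 1) = X + ((N - 1 : ℕ) : ℤ) := by
    rw [Finset.sum_add_distrib, Finset.sum_const, Finset.card_range, nsmul_eq_mul, mul_one, hX]
  rw [hsum]
  have hcastN1 : ((N - 1 : ℕ) : ℤ) = n - 1 := by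
    push_cast [Nat.cast_sub (by omega : 1 ≤ N)]
    omega
  have hfin : (2 * n) * X = (2 * n) * (g - n + 1) := by
    linear_combination (-2*n) * hDX - 2 * hSplitDM + hTot - hMval + 2*n*hCg + n*hCC
  have hXval : X = g - n + 1 := mul_left_cancel₀ (by omega) hfin
  rw [hXval, hcastN1]
  ring
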